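/- If b_0(θ) > 0 for every θ ∈ Θ, then almost surely the limit lim_{t→∞} b_t(θ*) exists and is strictly positive. -/

import Mathlib

open MeasureTheory Filter

/-- **The local belief on the true hypothesis converges to a strictly positive limit.**
`Θ` is a finite nonempty set of hypotheses with true hypothesis `θ* ∈ Θ`; `Q` a finite set of
states; `S` a finite set of observations; `l` a likelihood function (nonnegative, summing to one
over `S` for every `θ, q`); `(q_t)` a fixed deterministic state path; the observations
`(s_t)_{t ≥ 1}` are mutually independent with `s_t` distributed according to `l(·|θ*,q_t)`; the
local beliefs evolve from a probability vector `b_0` by the Bayesian update. If `b_0(θ) > 0` for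
every `θ ∈ Θ`, then almost surely the limit `lim_{t→∞} b_t(θ*)` exists and is strictly
positive. -/
theorem local_belief_true_limit_pos
    {Θ : Type*} [Fintype Θ] [Nonempty Θ] (θstar : Θ)
    {Q : Type*} [Fintype Q]
    {S : Type*} [Fintype S] [Nonempty S] [MeasurableSpace S] [MeasurableSingletonClass S]
    (l : Θ → Q → S → ℝ)
    (hl_nonneg : ∀ θ q s, 0 ≤ l θ q s)
    (hl_sum : ∀ θ q, ∑ s, l θ q s = 1)
    (q : ℕ → Q)
    {Ω : Type*} [MeasurableSpace Ω] (P : Measure Ω) [IsProbabilityMeasure P]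
    (s : ℕ → Ω → S)
    (hs_meas : ∀ t, 1 ≤ t → Measurable (s t))
    (hs_law : ∀ t, 1 ≤ t → ∀ x, P {ω | s t ω = x} = ENNReal.ofReal (l θstar (q t) x))
    (hs_indep : ProbabilityTheory.iIndepFun
      (fun t : {t : ℕ // 1 ≤ t} => s t.1) P)
    (b : ℕ → Θ → Ω → ℝ)
    (b0 : Θ → ℝ)
    (hb0_sum : ∑ θ, b0 θ = 1)
    (hb_init : ∀ θ ω, b 0 θ ω = b0 θ)
    (hb_upd : ∀ t θ ω, b (t + 1) θ ω =
      l θ (q (t + 1)) (s (t + 1) ω) * b t θ ω /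
        ∑ θ', l θ' (q (t + 1)) (s (t + 1) ω) * b t θ' ω)
    (hb0_pos : ∀ θ, 0 < b0 θ) :
    ∀ᵐ ω ∂P, ∃ c : ℝ, 0 < c ∧ Tendsto (fun t => b t θstar ω) atTop (nhds c) := by
  classical
  -- the filtration generated by the observations
  let ι := {t : ℕ // 1 ≤ t}
  let ℱ : Filtration ℕ (inferInstance : MeasurableSpace Ω) :=
    { seq := fun t => ⨆ i ∈ {i : ι | i.1 ≤ t}, MeasurableSpace.comap (s i.1) inferInstance
      mono' := fun u v huv => by
        refine iSup₂_le fun i hi => ?_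
        exact le_iSup₂ (f := fun (i : ι) (_ : i ∈ {i : ι | i.1 ≤ v}) =>
          MeasurableSpace.comap (s i.1) inferInstance) i (le_trans hi huv)
      le' := fun t => iSup₂_le fun i _ => (hs_meas i.1 i.2).comap_le }
  -- the likelihood ratios and ratio products
  let r : Θ → ℕ → S → ℝ := fun θ k x => l θ (q k) x / l θstar (q k) x
  let w : Θ → ℝ := fun θ => b0 θ / b0 θstar
  let Xp : Θ → ℕ → Ω → ℝ := fun θ t ω => ∏ k ∈ Finset.Icc 1 t, r θ k (s k ω)
  let X : ℕ → Ω → ℝ := fun t ω => ∑ θ, w θ * Xp θ t ω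
  have hr_nonneg : ∀ θ k x, 0 ≤ r θ k x :=
    fun θ k x => div_nonneg (hl_nonneg _ _ _) (hl_nonneg _ _ _)
  have hw_pos : ∀ θ, 0 < w θ := fun θ => div_pos (hb0_pos θ) (hb0_pos θstar)
  -- measurability
  have hcomap_le : ∀ k, 1 ≤ k → ∀ t, k ≤ t →
      MeasurableSpace.comap (s k) inferInstance ≤ ℱ t := by
    intro k hk t hkt
    exact le_iSup₂ (f := fun (i : ι) (_ : i ∈ {i : ι | i.1 ≤ t}) =>
      MeasurableSpace.comap (s i.1) inferInstance) ⟨k, hk⟩ hkt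
  have hmeas_comp : ∀ (g : S → ℝ) (k : ℕ),
      Measurable[MeasurableSpace.comap (s k) inferInstance] (fun ω => g (s k ω)) :=
    fun g k => (measurable_of_countable g).comp (Measurable.of_comap_le le_rfl)
  have hXp_meas : ∀ θ t, Measurable[ℱ t] (Xp θ t) := by
    intro θ t
    refine Finset.measurable_prod _ fun k hk => ?_
    have hk' := Finset.mem_Icc.1 hk
    exact (hmeas_comp (r θ k) k).mono (hcomap_le k hk'.1 t hk'.2) le_rfl
  have hX_meas : ∀ t, Measurable[ℱ t] (X t) :=
    fun t => Finset.measurable_sum _ fun θ _ => measurable_const.mul (hXp_meas θ t)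
  -- integrability
  let M : Θ → ℕ → ℝ := fun θ k => Finset.univ.sup' Finset.univ_nonempty fun x => |r θ k x|
  have hM : ∀ θ k x, |r θ k x| ≤ M θ k :=
    fun θ k x => Finset.le_sup' (fun x => |r θ k x|) (Finset.mem_univ x)
  have hXp_bdd : ∀ θ t ω, |Xp θ t ω| ≤ ∏ k ∈ Finset.Icc 1 t, M θ k := by
    intro θ t ω
    rw [show |Xp θ t ω| = ∏ k ∈ Finset.Icc 1 t, |r θ k (s k ω)| from Finset.abs_prod _ _]
    exact Finset.prod_le_prod (fun k _ => abs_nonneg _) (fun k _ => hM θ k _)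
  have hXp_int : ∀ θ t, Integrable (Xp θ t) P := by
    intro θ t
    refine Integrable.mono' (integrable_const (∏ k ∈ Finset.Icc 1 t, M θ k))
      ((hXp_meas θ t).mono (ℱ.le t) le_rfl).aestronglyMeasurable (ae_of_all _ fun ω => ?_)
    rw [Real.norm_eq_abs]; exact hXp_bdd θ t ω
  have hX_int : ∀ t, Integrable (X t) P :=
    fun t => integrable_finset_sum _ fun θ _ => (hXp_int θ t).const_mul _
  -- expectation of a function of one observation
  have hsetmeas : ∀ k, 1 ≤ k → ∀ x : S, MeasurableSet {ω | s k ω = x} :=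
    fun k hk x => (hs_meas k hk) (measurableSet_singleton x)
  have hexp : ∀ (g : S → ℝ) (k : ℕ), 1 ≤ k →
      ∫ ω, g (s k ω) ∂P = ∑ x, g x * l θstar (q k) x := by
    intro g k hk
    have h1 : (fun ω => g (s k ω)) =
        fun ω => ∑ x, Set.indicator {ω' | s k ω' = x} (fun _ => g x) ω := by
      funext ω
      simp [Set.indicator_apply, Finset.sum_ite_eq]
    rw [h1, integral_finset_sum _ fun x _ => (integrable_const (g x)).indicator (hsetmeas k hk x)]
    refine Finset.sum_congr rfl fun x _ => ?_
    rw [integral_indicator_const _ (hsetmeas k hk x), measureReal_def, hs_law k hk x, smul_eq_mul,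
      ENNReal.toReal_ofReal (hl_nonneg _ _ _), mul_comm]
  have hexp_le : ∀ θ k, 1 ≤ k → ∫ ω, r θ k (s k ω) ∂P ≤ 1 := by
    intro θ k hk
    rw [hexp (r θ k) k hk]
    calc ∑ x, r θ k x * l θstar (q k) x ≤ ∑ x, l θ (q k) x := by
          refine Finset.sum_le_sum fun x _ => ?_
          by_cases hx : l θstar (q k) x = 0
          · simp only [hx, mul_zero]; exact hl_nonneg _ _ _
          · rw [show r θ k x * l θstar (q k) x = l θ (q k) x from div_mul_cancel₀ _ hx]
      _ = 1 := hl_sum θ (q k)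
  -- independence of the next observation from the past
  have hii : ProbabilityTheory.iIndep
      (fun i : ι => MeasurableSpace.comap (s i.1) inferInstance) P :=
      (ProbabilityTheory.iIndepFun_iff_iIndep _ _ _).1 hs_indep
  have hindep : ∀ t, ProbabilityTheory.Indep
      (MeasurableSpace.comap (s (t + 1)) inferInstance) (ℱ t) P := by
    intro t
    have hd : Disjoint {(⟨t + 1, Nat.le_add_left 1 t⟩ : ι)} {i : ι | i.1 ≤ t} := by
      rw [Set.disjoint_left]
      rintro i hi hi'
      rw [Set.mem_singleton_iff] at hi
      subst hi
      simp only [Set.mem_setOf_eq] at hi'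
      omega
    have h := ProbabilityTheory.indep_iSup_of_disjoint
      (fun i : ι => (hs_meas i.1 i.2).comap_le) hii hd
    rwa [iSup_singleton] at h
  have hone : ∀ t : ℕ, (1:ℕ) ≤ t + 1 := fun t => Nat.le_add_left 1 t
  -- conditional expectation of a function of the next observation
  have hcond_G : ∀ θ t, P[(fun ω => r θ (t + 1) (s (t + 1) ω))|ℱ t]
      =ᵐ[P] fun _ => ∫ ω, r θ (t + 1) (s (t + 1) ω) ∂P := by
    intro θ t
    exact MeasureTheory.condExp_indep_eq ((hs_meas (t + 1) (hone t)).comap_le) (ℱ.le t)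
      ((hmeas_comp (r θ (t + 1)) (t + 1)).stronglyMeasurable) (hindep t)
  have hG_int : ∀ θ t, Integrable (fun ω => r θ (t + 1) (s (t + 1) ω)) P := by
    intro θ t
    refine Integrable.mono' (integrable_const (M θ (t + 1)))
      (((hmeas_comp (r θ (t + 1)) (t + 1)).mono
        ((hs_meas (t + 1) (hone t)).comap_le) le_rfl)).aestronglyMeasurable
      (ae_of_all _ fun ω => ?_)
    rw [Real.norm_eq_abs]; exact hM θ (t + 1) _
  -- supermartingale step
  have hstep : ∀ t, P[X (t + 1)|ℱ t] ≤ᵐ[P] X t := by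
    intro t
    set F : Θ → Ω → ℝ := fun θ ω => w θ * Xp θ t ω with hF
    set G : Θ → Ω → ℝ := fun θ ω => r θ (t + 1) (s (t + 1) ω) with hGdef
    have hFG_eq : ∀ θ, F θ * G θ = fun ω => w θ * Xp θ (t + 1) ω := by
      intro θ
      funext ω
      simp only [Pi.mul_apply, hF, hGdef, Xp]
      rw [Finset.prod_Icc_succ_top (hone t)]
      ring
    have hXsplit : X (t + 1) = ∑ θ, F θ * G θ := by
      funext ω
      rw [Finset.sum_apply]
      exact Finset.sum_congr rfl fun θ _ => by rw [hFG_eq θ]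
    have hFG_int : ∀ θ, Integrable (F θ * G θ) P := by
      intro θ
      rw [hFG_eq θ]
      exact (hXp_int θ (t + 1)).const_mul _
    have hsum : P[X (t + 1)|ℱ t] =ᵐ[P] ∑ θ, P[F θ * G θ|ℱ t] := by
      rw [hXsplit]
      exact condExp_finset_sum (fun θ _ => hFG_int θ) (ℱ t)
    have hpull : ∀ θ, P[F θ * G θ|ℱ t] =ᵐ[P] F θ * P[G θ|ℱ t] := fun θ =>
      condExp_mul_of_stronglyMeasurable_left
        ((measurable_const.mul (hXp_meas θ t)).stronglyMeasurable)
        (hFG_int θ) (hG_int θ t)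
    have hF_nonneg : ∀ θ ω, 0 ≤ F θ ω := fun θ ω =>
      mul_nonneg (hw_pos θ).le (Finset.prod_nonneg fun k _ => hr_nonneg θ k _)
    filter_upwards [hsum, ae_all_iff.2 hpull, ae_all_iff.2 fun θ => hcond_G θ t]
      with ω h1 h2 h3
    rw [h1, Finset.sum_apply]
    have hXt : X t ω = ∑ θ, F θ ω := rfl
    rw [hXt]
    refine Finset.sum_le_sum fun θ _ => ?_
    rw [h2 θ, Pi.mul_apply, h3 θ]
    exact mul_le_of_le_one_right (hF_nonneg θ ω) (hexp_le θ (t + 1) (hone t))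
  have hadp : StronglyAdapted ℱ X := fun t => (hX_meas t).stronglyMeasurable
  have hsuper : Supermartingale X ℱ P := supermartingale_nat hadp hX_int hstep
  -- L¹ boundedness
  have hX_nonneg : ∀ t ω, 0 ≤ X t ω := fun t ω =>
    Finset.sum_nonneg fun θ _ =>
      mul_nonneg (hw_pos θ).le (Finset.prod_nonneg fun k _ => hr_nonneg θ k _)
  have hX0 : ∀ ω, X 0 ω = ∑ θ, w θ := by
    intro ω
    refine Finset.sum_congr rfl fun θ _ => ?_
    simp [Xp]
  have hint_le : ∀ n, ∫ ω, X n ω ∂P ≤ ∑ θ, w θ := by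
    intro n
    have h := hsuper.setIntegral_le (Nat.zero_le n) (MeasurableSet.univ (α := Ω))
    rw [setIntegral_univ, setIntegral_univ] at h
    refine h.trans ?_
    have : ∫ ω, X 0 ω ∂P = ∫ _ω, (∑ θ, w θ) ∂P := by
      exact integral_congr_ae (ae_of_all _ fun ω => hX0 ω)
    rw [this, integral_const]
    simp
  have hbdd : ∀ n, eLpNorm ((-X) n) 1 P ≤ ENNReal.ofReal (∑ θ, w θ) := by
    intro n
    have hneg : (-X) n = -(X n) := rfl
    rw [hneg, eLpNorm_neg, eLpNorm_one_eq_lintegral_enorm]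
    have h1 : ∀ ω, ‖X n ω‖ₑ = ENNReal.ofReal (X n ω) := fun ω =>
      Real.enorm_eq_ofReal (hX_nonneg n ω)
    rw [lintegral_congr h1,
      ← ofReal_integral_eq_lintegral_ofReal (hX_int n) (ae_of_all _ (hX_nonneg n))]
    exact ENNReal.ofReal_le_ofReal (hint_le n)
  have hconv := hsuper.neg.exists_ae_tendsto_of_bdd hbdd
  -- the almost sure event where all true likelihoods along the path are positive
  have hgood : ∀ᵐ ω ∂P, ∀ k, 1 ≤ k → 0 < l θstar (q k) (s k ω) := by
    rw [ae_all_iff]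
    intro k
    by_cases hk : 1 ≤ k
    · rw [ae_iff]
      have hsub : {ω | ¬(1 ≤ k → 0 < l θstar (q k) (s k ω))} ⊆
          ⋃ x ∈ {x : S | l θstar (q k) x = 0}, {ω | s k ω = x} := by
        intro ω hω
        simp only [Set.mem_setOf_eq, not_forall] at hω
        obtain ⟨-, hω2⟩ := hω
        have h0 : l θstar (q k) (s k ω) = 0 :=
          le_antisymm (not_lt.1 hω2) (hl_nonneg _ _ _)
        exact Set.mem_biUnion h0 rfl
      refine measure_mono_null hsub ?_
      refine measure_biUnion_null_iff (Set.to_countable _) |>.2 fun x hx => ?_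
      have hx' : l θstar (q k) x = 0 := hx
      rw [hs_law k hk x, hx']
      simp
    · exact ae_of_all _ fun ω h => absurd h hk
  -- conclusion
  filter_upwards [hconv, hgood] with ω hc hg
  obtain ⟨c, hc⟩ := hc
  have hXtend : Tendsto (fun n => X n ω) atTop (nhds (-c)) := by
    have h := hc.neg
    simp only [Pi.neg_apply] at h
    simpa using h
  -- explicit formula for the beliefs
  set A : Θ → ℕ → ℝ := fun θ t => b0 θ * ∏ k ∈ Finset.Icc 1 t, l θ (q k) (s k ω) with hA
  set D : ℕ → ℝ := fun t => ∑ θ, A θ t with hD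
  have hlpos : ∀ k, 1 ≤ k → 0 < l θstar (q k) (s k ω) := hg
  have hA_pos : ∀ t, 0 < A θstar t := fun t =>
    mul_pos (hb0_pos _) (Finset.prod_pos fun k hk => hlpos k (Finset.mem_Icc.1 hk).1)
  have hA_nonneg : ∀ θ t, 0 ≤ A θ t := fun θ t =>
    mul_nonneg (hb0_pos θ).le (Finset.prod_nonneg fun k _ => hl_nonneg _ _ _)
  have hD_pos : ∀ t, 0 < D t := fun t =>
    Finset.sum_pos' (fun θ _ => hA_nonneg θ t) ⟨θstar, Finset.mem_univ _, hA_pos t⟩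
  have hAsucc : ∀ θ t, A θ (t + 1) = l θ (q (t + 1)) (s (t + 1) ω) * A θ t := by
    intro θ t
    simp only [hA]
    rw [Finset.prod_Icc_succ_top (hone t)]
    ring
  have hbf : ∀ t θ, b t θ ω = A θ t / D t := by
    intro t
    induction t with
    | zero =>
      intro θ
      have hD0 : D 0 = 1 := by
        simp only [hD, hA, Finset.Icc_self, Finset.Icc_eq_empty_of_lt Nat.zero_lt_one,
          Finset.prod_empty, mul_one]
        exact hb0_sum
      have hA0 : A θ 0 = b0 θ := by
        simp [hA, Finset.Icc_eq_empty_of_lt Nat.zero_lt_one]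
      rw [hb_init θ ω, hA0, hD0, div_one]
    | succ t ih =>
      intro θ
      have hden : ∑ θ', l θ' (q (t + 1)) (s (t + 1) ω) * b t θ' ω = D (t + 1) / D t := by
        have : D (t + 1) = ∑ θ', l θ' (q (t + 1)) (s (t + 1) ω) * A θ' t := by
          simp only [hD]
          exact Finset.sum_congr rfl fun θ' _ => hAsucc θ' t
        rw [this, Finset.sum_div]
        refine Finset.sum_congr rfl fun θ' _ => ?_
        rw [ih θ']
        ring
      rw [hb_upd t θ ω, ih θ, hden, hAsucc θ t]
      have h1 : D t ≠ 0 := (hD_pos t).ne'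
      have h2 : D (t + 1) ≠ 0 := (hD_pos (t + 1)).ne'
      field_simp
  -- formula for X in terms of A and D
  have hXformula : ∀ t, X t ω = D t / A θstar t := by
    intro t
    have hXt : X t ω = ∑ θ, A θ t / A θstar t := by
      refine Finset.sum_congr rfl fun θ _ => ?_
      have hXpθ : Xp θ t ω =
          (∏ k ∈ Finset.Icc 1 t, l θ (q k) (s k ω)) /
            (∏ k ∈ Finset.Icc 1 t, l θstar (q k) (s k ω)) := by
        simp only [Xp]
        exact Finset.prod_div_distrib _ _
      rw [hXpθ]
      simp only [hA]
      rw [div_mul_div_comm]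
    rw [hXt, hD, Finset.sum_div]
  have hbX : ∀ t, b t θstar ω = (X t ω)⁻¹ := by
    intro t
    rw [hbf t θstar, hXformula t, inv_div]
  have hL1 : ∀ t, (1 : ℝ) ≤ X t ω := by
    intro t
    rw [hXformula t, le_div_iff₀ (hA_pos t), one_mul]
    exact Finset.single_le_sum (fun θ _ => hA_nonneg θ t) (Finset.mem_univ θstar)
  have hLge : (1 : ℝ) ≤ -c := ge_of_tendsto' hXtend hL1
  refine ⟨(-c)⁻¹, inv_pos.2 (lt_of_lt_of_le one_pos hLge), ?_⟩
  have : Tendsto (fun t => (X t ω)⁻¹) atTop (nhds (-c)⁻¹) :=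
    hXtend.inv₀ (by linarith)
  exact (tendsto_congr fun t => (hbX t).symm).1 this
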